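/- Let G, G', H be finite simple graphs and h, d ∈ ℕ. If G' is a depth-h minor of G and H is a depth-d minor of G', then H is a depth-(2hd + h + d) minor of G. -/

import Mathlib

/-- A minor model of `H` in `G`: pairwise disjoint connected branch sets `bs u ⊆ V(G)`,
one for each vertex `u` of `H`, such that every edge of `H` is witnessed by an edge of `G`
between the corresponding branch sets. -/
structure MinorModel {W V : Type} (H : SimpleGraph W) (G : SimpleGraph V) where
  bs : W → Set V
  connected : ∀ u : W, (G.induce (bs u)).Connected
  disjoint : ∀ u v : W, u ≠ v → Disjoint (bs u) (bs v)
  edge : ∀ u v : W, H.Adj u v → ∃ a ∈ bs u, ∃ b ∈ bs v, G.Adj a b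

/-- The set `s` has radius at most `r` in `G[s]`: some `c ∈ s` is joined inside `G[s]` to
every vertex of `s` by a walk of length at most `r`. -/
def RadiusLE {V : Type} (G : SimpleGraph V) (s : Set V) (r : ℕ) : Prop :=
  ∃ c : V, ∃ hc : c ∈ s, ∀ x : V, ∀ hx : x ∈ s,
    ∃ w : (G.induce s).Walk ⟨c, hc⟩ ⟨x, hx⟩, w.length ≤ r

/-- `H` is a depth-`r` minor of `G`: there is a minor model of `H` in `G` all of whose
branch sets have radius at most `r`. -/
def IsDepthMinor {W V : Type} (H : SimpleGraph W) (G : SimpleGraph V) (r : ℕ) : Prop :=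
  ∃ M : MinorModel H G, ∀ u : W, RadiusLE G (M.bs u) r

/-- Inclusion hom between induced subgraphs. -/
def induceHomOfLE' {V : Type} (G : SimpleGraph V) {s t : Set V} (hst : s ⊆ t) :
    G.induce s →g G.induce t where
  toFun x := ⟨x.1, hst x.2⟩
  map_rel' := fun hab => hab

lemma radiusLE_connected {V : Type} (G : SimpleGraph V) (s : Set V) (r : ℕ)
    (hr : RadiusLE G s r) : (G.induce s).Connected := by
  obtain ⟨c, hc, hw⟩ := hr
  have : Nonempty ↥s := ⟨⟨c, hc⟩⟩
  refine ⟨fun x y => ?_⟩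
  obtain ⟨wx, -⟩ := hw x.1 x.2
  obtain ⟨wy, -⟩ := hw y.1 y.2
  exact ⟨wx.reverse.append wy⟩

/-- Key transfer lemma. -/
lemma key_walk {V V' : Type} (G : SimpleGraph V) (G' : SimpleGraph V')
    (bs1 : V' → Set V) (h : ℕ) (ctr : V' → V) (hctr : ∀ a, ctr a ∈ bs1 a)
    (hwalk : ∀ a, ∀ x, ∀ hx : x ∈ bs1 a,
      ∃ w : (G.induce (bs1 a)).Walk ⟨ctr a, hctr a⟩ ⟨x, hx⟩, w.length ≤ h)
    (hedge : ∀ a b : V', G'.Adj a b → ∃ y ∈ bs1 a, ∃ z ∈ bs1 b, G.Adj y z)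
    (s : Set V') (t : Set V) (hsub : ∀ a, a ∈ s → bs1 a ⊆ t)
    {a b : ↥s} (p : (G'.induce s).Walk a b) :
    ∀ x, ∀ hx : x ∈ bs1 b.1,
      ∃ q : (G.induce t).Walk ⟨ctr a.1, hsub a.1 a.2 (hctr a.1)⟩ ⟨x, hsub b.1 b.2 hx⟩,
        q.length ≤ h + p.length * (2 * h + 1) := by
  induction p with
  | nil =>
    rename_i u
    intro x hx
    obtain ⟨w, hw⟩ := hwalk _ x hx
    refine ⟨w.map (induceHomOfLE' G (hsub u.1 u.2)), ?_⟩
    refine le_trans (le_of_eq (SimpleGraph.Walk.length_map _ _)) ?_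
    simpa using hw
  | @cons a a' b hadj p ih =>
    intro x hx
    obtain ⟨y, hy, z, hz, hyz⟩ := hedge a.1 a'.1 hadj
    obtain ⟨w1, hw1⟩ := hwalk a.1 y hy
    obtain ⟨w2, hw2⟩ := hwalk a'.1 z hz
    obtain ⟨q3, hq3⟩ := ih x hx
    have estep : (G.induce t).Adj ⟨y, hsub a.1 a.2 hy⟩ ⟨z, hsub a'.1 a'.2 hz⟩ := hyz
    refine ⟨(w1.map (induceHomOfLE' G (hsub a.1 a.2))).append
      (SimpleGraph.Walk.cons estep
        (((w2.map (induceHomOfLE' G (hsub a'.1 a'.2))).reverse).append q3)), ?_⟩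
    simp only [SimpleGraph.Walk.length_append, SimpleGraph.Walk.length_cons,
      SimpleGraph.Walk.length_reverse, SimpleGraph.Walk.length_map]
    have : p.length * (2 * h + 1) ≤ p.length * (2 * h + 1) := le_refl _
    have e1 := SimpleGraph.Walk.length_map (induceHomOfLE' G (hsub a.1 a.2)) w1
    have e2 := SimpleGraph.Walk.length_map (induceHomOfLE' G (hsub a'.1 a'.2)) w2
    have e3 := SimpleGraph.Walk.length_append (w1.map (induceHomOfLE' G (hsub a.1 a.2)))
      (SimpleGraph.Walk.cons estep
        (((w2.map (induceHomOfLE' G (hsub a'.1 a'.2))).reverse).append q3))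
    have e4 := SimpleGraph.Walk.length_cons estep
        (((w2.map (induceHomOfLE' G (hsub a'.1 a'.2))).reverse).append q3)
    have e5 := SimpleGraph.Walk.length_append
        ((w2.map (induceHomOfLE' G (hsub a'.1 a'.2))).reverse) q3
    have e6 := SimpleGraph.Walk.length_reverse (w2.map (induceHomOfLE' G (hsub a'.1 a'.2)))
    refine le_trans (le_of_eq e3) ?_
    have h5 := e5.le.trans (Nat.add_le_add ((e6.trans e2).le.trans hw2) hq3)
    have h4 := e4.le.trans (Nat.add_le_add_right h5 1)
    exact (Nat.add_le_add (e1.le.trans hw1) h4).trans (by nlinarith)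

/-- If `G'` is a depth-`h` minor of `G` and `H` is a depth-`d` minor of `G'`, then `H` is a
depth-`(2hd + h + d)` minor of `G`. -/
theorem depthMinor_trans {V V' W : Type} [Finite V] [Finite V'] [Finite W]
    (G : SimpleGraph V) (G' : SimpleGraph V') (H : SimpleGraph W) (h d : ℕ)
    (h1 : IsDepthMinor G' G h) (h2 : IsDepthMinor H G' d) :
    IsDepthMinor H G (2 * h * d + h + d) := by
  obtain ⟨M1, hr1⟩ := h1
  obtain ⟨M2, hr2⟩ := h2
  set ctr : V' → V := fun a => (hr1 a).choose with hctrdef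
  have hctr : ∀ a, ctr a ∈ M1.bs a := fun a => (hr1 a).choose_spec.choose
  have hwalk : ∀ a, ∀ x, ∀ hx : x ∈ M1.bs a,
      ∃ w : (G.induce (M1.bs a)).Walk ⟨ctr a, hctr a⟩ ⟨x, hx⟩, w.length ≤ h :=
    fun a => (hr1 a).choose_spec.choose_spec
  set bs : W → Set V := fun u => {x | ∃ a ∈ M2.bs u, x ∈ M1.bs a} with hbsdef
  have hsub : ∀ u : W, ∀ a, a ∈ M2.bs u → M1.bs a ⊆ bs u := by
    intro u a ha x hx; exact ⟨a, ha, hx⟩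
  -- radius bound
  have hrad : ∀ u : W, RadiusLE G (bs u) (2 * h * d + h + d) := by
    intro u
    obtain ⟨c', hc', hwc'⟩ := hr2 u
    refine ⟨ctr c', hsub u c' hc' (hctr c'), ?_⟩
    rintro x ⟨a, ha, hx⟩
    obtain ⟨p, hp⟩ := hwc' a ha
    obtain ⟨q, hq⟩ := key_walk G G' M1.bs h ctr hctr hwalk
      (fun a b hab => M1.edge a b hab) (M2.bs u) (bs u) (hsub u) p x hx
    refine ⟨q, ?_⟩
    calc q.length ≤ h + p.length * (2 * h + 1) := hq
      _ ≤ h + d * (2 * h + 1) := by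
          have := Nat.mul_le_mul_right (2 * h + 1) hp
          omega
      _ = 2 * h * d + h + d := by ring
  refine ⟨⟨bs, fun u => radiusLE_connected G (bs u) _ (hrad u), ?_, ?_⟩, hrad⟩
  · -- disjoint
    intro u v huv
    rw [Set.disjoint_left]
    rintro x ⟨a, ha, hxa⟩ ⟨b, hb, hxb⟩
    rcases eq_or_ne a b with rfl | hab
    · exact (M2.disjoint u v huv).ne_of_mem ha hb rfl
    · exact Set.disjoint_left.mp (M1.disjoint a b hab) hxa hxb
  · -- edges
    intro u v huv
    obtain ⟨a, ha, b, hb, hab⟩ := M2.edge u v huv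
    obtain ⟨y, hy, z, hz, hyz⟩ := M1.edge a b hab
    exact ⟨y, ⟨a, ha, hy⟩, z, ⟨b, hb, hz⟩, hyz⟩
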